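/- Let S be a set of n points in the plane with distinct y-coordinates, ordered p_1,...,p_n by increasing y. Let B be a bipath on S_i (1 ≤ i ≤ n-1) that is safe: either i = 1, or the higher of the two path-endpoints, say the top endpoint of L at p_ℓ with ℓ > r (the index of the top endpoint of R), satisfies that the open region strictly to the right of the rightmost ray from p_r through a point of S_ℓ \ S_r and strictly above the horizontal line through p_ℓ contains at least one point of S (symmetrically when R's endpoint is higher). Then B extends to a non-crossing monotone Hamiltonian cycle on S. -/

import Mathlib

open scoped BigOperators

abbrev Pt : Type := ℝ × ℝ

noncomputable section

/-- Signed cross product: positive iff `b` is strictly left of the directed line `o → a`. -/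
def xprod (o a b : Pt) : ℝ := (a.1 - o.1) * (b.2 - o.2) - (a.2 - o.2) * (b.1 - o.1)

/-- Closed straight-line segment between two points. -/
def Seg (p q : Pt) : Set Pt := segment ℝ p q

/-- Consecutive edges of a polyline given by a list of points. -/
def edgesOf (l : List Pt) : List (Pt × Pt) := l.zip l.tail

/-- The set of points covered by a polyline. -/
def polyPts (l : List Pt) : Set Pt := ⋃ e ∈ edgesOf l, Seg e.1 e.2

/-- A polyline is y-monotone: strictly increasing y-coordinates. -/
def MonoPath (l : List Pt) : Prop := l.Chain' (fun p q => p.2 < q.2)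

/-- Two segments do not cross: any common point is an endpoint of both. -/
def SegNC (e f : Pt × Pt) : Prop :=
  ∀ x : Pt, x ∈ Seg e.1 e.2 → x ∈ Seg f.1 f.2 →
    (x = e.1 ∨ x = e.2) ∧ (x = f.1 ∨ x = f.2)

/-- No two distinct segments among the edges of the two polylines cross. -/
def PolyNC (L R : List Pt) : Prop :=
  ∀ e ∈ edgesOf L ++ edgesOf R, ∀ f ∈ edgesOf L ++ edgesOf R, e ≠ f → SegNC e f

/-- The polyline `L` is (weakly) to the left of `R` at every intermediate height. -/
def LeftOf (L R : List Pt) (ps pt : Pt) : Prop :=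
  ∀ p ∈ polyPts L, ∀ q ∈ polyPts R, p.2 = q.2 → ps.2 < p.2 → p.2 < pt.2 → p.1 < q.1

/-- All points of `S` have pairwise distinct y-coordinates. -/
def DistinctY (S : Finset Pt) : Prop := ∀ p ∈ S, ∀ q ∈ S, p.2 = q.2 → p = q

/-- General position: no three distinct points of `S` are collinear. -/
def GenPos (S : Finset Pt) : Prop :=
  ∀ p ∈ S, ∀ q ∈ S, ∀ r ∈ S, p ≠ q → p ≠ r → q ≠ r → xprod p q r ≠ 0

def IsLowest (S : Finset Pt) (p : Pt) : Prop := p ∈ S ∧ ∀ q ∈ S, q ≠ p → p.2 < q.2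

def IsHighest (S : Finset Pt) (p : Pt) : Prop := p ∈ S ∧ ∀ q ∈ S, q ≠ p → q.2 < p.2

/-- Points of `S` on the boundary of the convex hull of `S`. -/
def hullPts (S : Finset Pt) : Set Pt :=
  {p | p ∈ S ∧ p ∈ frontier (convexHull ℝ (S : Set Pt))}

/-- The left envelope: hull-boundary points of `S` on or to the left of the line `ps pt`. -/
def leftEnvelope (S : Finset Pt) (ps pt : Pt) : Set Pt :=
  {p ∈ hullPts S | 0 ≤ xprod ps pt p}

/-- The right envelope: hull-boundary points of `S` on or to the right of the line `ps pt`. -/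
def rightEnvelope (S : Finset Pt) (ps pt : Pt) : Set Pt :=
  {p ∈ hullPts S | xprod ps pt p ≤ 0}

/-- A non-crossing monotone Hamiltonian cycle on `S`, given by its two monotone
paths `L` and `R` from the lowest point `ps` to the highest point `pt`. -/
structure IsNCMonoHamCycle (S : Finset Pt) (ps pt : Pt) (L R : List Pt) : Prop where
  monoL : MonoPath L
  monoR : MonoPath R
  headL : L.head? = some ps
  headR : R.head? = some ps
  lastL : L.getLast? = some pt
  lastR : R.getLast? = some pt
  nodupL : L.Nodup
  nodupR : R.Nodup
  cover : ∀ p : Pt, p ∈ S ↔ (p ∈ L ∨ p ∈ R)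
  shared : ∀ p : Pt, p ∈ L → p ∈ R → p = ps ∨ p = pt
  noncross : PolyNC L R

/-- An upward planar straight-line embedding of the digraph `(V, E)` on the pointset `S`. -/
structure IsUPSE {V : Type} (E : V → V → Prop) (S : Finset Pt) (f : V → Pt) : Prop where
  bij : Set.BijOn f Set.univ (S : Set Pt)
  upward : ∀ u v : V, E u v → (f u).2 < (f v).2
  planar : ∀ u v w z : V, E u v → E w z → (u, v) ≠ (w, z) → SegNC (f u, f v) (f w, f z)

/-- Undirected reachability in a digraph. -/
def UReach {V : Type} (E : V → V → Prop) (a b : V) : Prop :=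
  Relation.ReflTransGen (fun x y => E x y ∨ E y x) a b

/-- The digraph `E` with the edges of `W` removed. -/
def AvoidW {V : Type} (E : V → V → Prop) (W : Set (V × V)) : V → V → Prop :=
  fun a b => E a b ∧ (a, b) ∉ W

/-- `W` is an st-cutset: removing `W` leaves exactly two undirected components,
one containing `s` and one containing `t`, and every edge of `W` goes from the
`s`-side to the `t`-side. -/
def IsSTCutset {V : Type} (E : V → V → Prop) (s t : V) (W : Set (V × V)) : Prop :=
  (∀ e ∈ W, E e.1 e.2) ∧
  (∀ v : V, UReach (AvoidW E W) s v ∨ UReach (AvoidW E W) t v) ∧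
  ¬ UReach (AvoidW E W) s t ∧
  (∀ e ∈ W, UReach (AvoidW E W) s e.1 ∧ UReach (AvoidW E W) t e.2)

/-- A bipath on `Si`: two non-crossing monotone paths starting at `p1`,
internally disjoint, together covering `Si`, with `L` to the left of `R`. -/
structure IsBipath (Si : Finset Pt) (p1 : Pt) (L R : List Pt) : Prop where
  monoL : MonoPath L
  monoR : MonoPath R
  headL : L.head? = some p1
  headR : R.head? = some p1
  nodupL : L.Nodup
  nodupR : R.Nodup
  cover : ∀ p : Pt, p ∈ Si ↔ (p ∈ L ∨ p ∈ R)
  shared : ∀ p : Pt, p ∈ L → p ∈ R → p = p1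
  noncross : PolyNC L R
  leftOf : ∀ p ∈ polyPts L, ∀ q ∈ polyPts R, p.2 = q.2 → p1.2 < p.2 → p ≠ q → p.1 < q.1

/-- The bipath `(L, R)` on `Si` extends to the non-crossing monotone Hamiltonian
cycle `(L', R')` on `S`, i.e. the restriction of the cycle to `Si` is `(L, R)`. -/
def ExtendsTo (S Si : Finset Pt) (ps pt : Pt) (L R L' R' : List Pt) : Prop :=
  IsNCMonoHamCycle S ps pt L' R' ∧
  L <+: L' ∧ R <+: R' ∧
  (∀ p ∈ L', p ∈ Si ↔ p ∈ L) ∧ (∀ p ∈ R', p ∈ Si ↔ p ∈ R)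

end
section Aux

open List

/-! ### Segment and xprod basics -/

lemma seg_iff {p q x : Pt} : x ∈ Seg p q ↔
    ∃ t : ℝ, 0 ≤ t ∧ t ≤ 1 ∧ x.1 = p.1 + t * (q.1 - p.1) ∧ x.2 = p.2 + t * (q.2 - p.2) := by
  constructor
  · intro hx
    rw [Seg, segment_eq_image'] at hx
    obtain ⟨t, ht, hx⟩ := hx
    refine ⟨t, ht.1, ht.2, ?_, ?_⟩ <;> · rw [← hx]; simp [Prod.smul_def, smul_eq_mul]
  · rintro ⟨t, h0, h1, hx1, hx2⟩
    rw [Seg, segment_eq_image']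
    refine ⟨t, ⟨h0, h1⟩, ?_⟩
    apply Prod.ext <;> simp [Prod.smul_def, smul_eq_mul, hx1.symm, hx2.symm]

lemma seg_left (p q : Pt) : p ∈ Seg p q := left_mem_segment ℝ p q
lemma seg_right (p q : Pt) : q ∈ Seg p q := right_mem_segment ℝ p q

lemma seg_y_bounds {p q x : Pt} (h : x ∈ Seg p q) (hpq : p.2 ≤ q.2) :
    p.2 ≤ x.2 ∧ x.2 ≤ q.2 := by
  obtain ⟨t, h0, h1, _, hx2⟩ := seg_iff.mp h
  constructor <;> nlinarith

lemma seg_top_eq {p q x : Pt} (h : x ∈ Seg p q) (hpq : p.2 < q.2) (hx : x.2 = q.2) : x = q := by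
  obtain ⟨t, h0, h1, hx1, hx2⟩ := seg_iff.mp h
  have ht : t = 1 := by nlinarith
  subst ht; apply Prod.ext <;> simp [hx1, hx2] <;> ring
  
lemma seg_bot_eq {p q x : Pt} (h : x ∈ Seg p q) (hpq : p.2 < q.2) (hx : x.2 = p.2) : x = p := by
  obtain ⟨t, h0, h1, hx1, hx2⟩ := seg_iff.mp h
  have ht : t = 0 := by nlinarith
  subst ht; apply Prod.ext <;> simp [hx1, hx2]

lemma xprod_self (o a : Pt) : xprod o a a = 0 := by simp [xprod]; ring

lemma xprod_swap (o a b : Pt) : xprod o a b = - xprod o b a := by simp [xprod]; ring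

lemma xprod_seg_param {o a p q x : Pt} (h : x ∈ Seg p q) :
    ∃ t : ℝ, 0 ≤ t ∧ t ≤ 1 ∧ x.2 = p.2 + t * (q.2 - p.2) ∧ (x = p ∨ 0 < t) ∧ (x = q ∨ t < 1) ∧
      xprod o a x = (1 - t) * xprod o a p + t * xprod o a q := by
  obtain ⟨t, h0, h1, hx1, hx2⟩ := seg_iff.mp h
  refine ⟨t, h0, h1, hx2, ?_, ?_, ?_⟩
  · rcases eq_or_lt_of_le h0 with h | h
    · left; subst h; apply Prod.ext <;> simp [hx1, hx2]
    · right; exact h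
  · rcases eq_or_lt_of_le h1 with h | h
    · left; subst h; apply Prod.ext <;> simp [hx1, hx2] <;> ring
    · right; exact h
  · simp [xprod, hx1, hx2]; ring

lemma xprod_seg_nonneg {o a p q x : Pt} (h : x ∈ Seg p q)
    (hp : 0 ≤ xprod o a p) (hq : 0 ≤ xprod o a q) : 0 ≤ xprod o a x := by
  obtain ⟨t, h0, h1, _, _, _, hx⟩ := xprod_seg_param (o := o) (a := a) h
  rw [hx]; nlinarith

lemma xprod_seg_pos_left {o a p q x : Pt} (h : x ∈ Seg p q)
    (hp : 0 < xprod o a p) (hq : 0 ≤ xprod o a q) (hx : x ≠ q) : 0 < xprod o a x := by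
  obtain ⟨t, h0, h1, _, _, ht1, hxe⟩ := xprod_seg_param (o := o) (a := a) h
  rcases ht1 with h | h; · exact absurd h hx
  rw [hxe]; nlinarith

lemma xprod_seg_pos_right {o a p q x : Pt} (h : x ∈ Seg p q)
    (hp : 0 ≤ xprod o a p) (hq : 0 < xprod o a q) (hx : x ≠ p) : 0 < xprod o a x := by
  obtain ⟨t, h0, h1, _, ht0, _, hxe⟩ := xprod_seg_param (o := o) (a := a) h
  rcases ht0 with h | h; · exact absurd h hx
  rw [hxe]; nlinarith

/-- point at height `c` on a segment, and sub-segment membership -/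
lemma seg_point_at_height {p q : Pt} (hpq : p.2 < q.2) {c : ℝ} (h1 : p.2 ≤ c) (h2 : c ≤ q.2) :
    ∃ w : Pt, w ∈ Seg p q ∧ w.2 = c := by
  refine ⟨(p.1 + (c - p.2)/(q.2 - p.2) * (q.1 - p.1), c), ?_, rfl⟩
  rw [seg_iff]
  refine ⟨(c - p.2)/(q.2 - p.2), div_nonneg (by linarith) (by linarith), ?_, rfl, ?_⟩
  · rw [div_le_one (by linarith)]; linarith
  · show c = p.2 + (c - p.2) / (q.2 - p.2) * (q.2 - p.2)
    rw [div_mul_cancel₀ _ (by linarith : q.2 - p.2 ≠ 0)]; ring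

lemma seg_sub {p q w x : Pt} (hw : w ∈ Seg p q) (hx : x ∈ Seg p q) (hpq : p.2 < q.2)
    (hwx : w.2 ≤ x.2) : x ∈ Seg w q := by
  obtain ⟨s, hs0, hs1, hw1, hw2⟩ := seg_iff.mp hw
  obtain ⟨t, ht0, ht1, hx1, hx2⟩ := seg_iff.mp hx
  have hst : s ≤ t := by nlinarith
  rcases eq_or_lt_of_le hs1 with h | h
  · subst h
    have : x = q := by
      have : t = 1 := le_antisymm ht1 (by linarith)
      subst this; apply Prod.ext <;> simp [hx1, hx2] <;> ring
    rw [this]; exact seg_right _ _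
  · rw [seg_iff]
    have hu : (t - s)/(1 - s) * (1 - s) = t - s := div_mul_cancel₀ _ (by linarith)
    refine ⟨(t - s)/(1 - s), div_nonneg (by linarith) (by linarith), ?_, ?_, ?_⟩
    · rw [div_le_one (by linarith)]; linarith
    · rw [hx1, hw1]; linear_combination (p.1 - q.1) * hu
    · rw [hx2, hw2]; linear_combination (p.2 - q.2) * hu

/-- relation between being left of a point on a segment and xprod w.r.t. the segment's line -/
lemma xprod_line_lt {c m x y : Pt} (hy : y ∈ Seg c m) (hcm : c.2 < m.2) (hxy : x.2 = y.2) :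
    (m.2 - c.2) * (y.1 - x.1) = xprod c m x := by
  obtain ⟨t, _, _, hy1, hy2⟩ := seg_iff.mp hy
  simp only [xprod]
  rw [hxy, hy2, hy1]; ring

lemma lt_of_xprod_pos {c m x y : Pt} (hy : y ∈ Seg c m) (hcm : c.2 < m.2) (hxy : x.2 = y.2)
    (h : 0 < xprod c m x) : x.1 < y.1 := by
  have := xprod_line_lt hy hcm hxy
  nlinarith

/-- orientation transitivity -/
lemma xprod_trans {o a b c : Pt} (ha : o.2 < a.2) (hb : o.2 < b.2) (hc : o.2 < c.2)
    (h1 : 0 < xprod o a b) (h2 : 0 ≤ xprod o b c) : 0 < xprod o a c := by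
  have key : xprod o a b * (c.2 - o.2) + xprod o b c * (a.2 - o.2) + xprod o c a * (b.2 - o.2) = 0 := by
    simp [xprod]; ring
  have h3 : xprod o c a * (b.2 - o.2) < 0 := by nlinarith
  have h4 : xprod o c a < 0 := by nlinarith
  have := xprod_swap o a c
  linarith [xprod_swap o c a]

end Aux
section Aux2

open List

/-! ### edgesOf and MonoPath basics -/

@[simp] lemma edgesOf_nil : edgesOf [] = [] := rfl
@[simp] lemma edgesOf_single (a : Pt) : edgesOf [a] = [] := rfl
@[simp] lemma edgesOf_cons_cons (a b : Pt) (t : List Pt) :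
    edgesOf (a :: b :: t) = (a, b) :: edgesOf (b :: t) := rfl

lemma mem_edges_fst {l : List Pt} {e : Pt × Pt} (h : e ∈ edgesOf l) : e.1 ∈ l := by
  induction l with
  | nil => simp at h
  | cons a t ih =>
    cases t with
    | nil => simp at h
    | cons b t' =>
      rw [edgesOf_cons_cons, List.mem_cons] at h
      rcases h with h | h
      · simp [h]
      · exact List.mem_cons_of_mem _ (ih h)

lemma mem_edges_snd {l : List Pt} {e : Pt × Pt} (h : e ∈ edgesOf l) : e.2 ∈ l := by
  induction l with
  | nil => simp at h
  | cons a t ih =>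
    cases t with
    | nil => simp at h
    | cons b t' =>
      rw [edgesOf_cons_cons, List.mem_cons] at h
      rcases h with h | h
      · simp [h]
      · exact List.mem_cons_of_mem _ (ih h)

lemma mem_edges_snd_tail {a : Pt} {l : List Pt} {e : Pt × Pt} (h : e ∈ edgesOf (a :: l)) :
    e.2 ∈ l := by
  cases l with
  | nil => simp at h
  | cons b t' =>
    rw [edgesOf_cons_cons, List.mem_cons] at h
    rcases h with h | h
    · simp [h]
    · exact mem_edges_snd h

lemma edgesOf_append {A B : List Pt} {a : Pt} (h : A.getLast? = some a) :
    edgesOf (A ++ B) = edgesOf A ++ edgesOf (a :: B) := by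
  induction A with
  | nil => simp at h
  | cons x t ih =>
    cases t with
    | nil =>
      simp only [List.getLast?_singleton, Option.some_inj] at h
      subst h; simp
    | cons y t' =>
      have h' : (y :: t').getLast? = some a := by
        rwa [List.getLast?_cons_cons] at h
      have ihh := ih h'
      simp only [List.cons_append] at ihh ⊢
      rw [edgesOf_cons_cons, edgesOf_cons_cons, ihh]
      simp

lemma polyPts_mem {l : List Pt} {x : Pt} :
    x ∈ polyPts l ↔ ∃ e ∈ edgesOf l, x ∈ Seg e.1 e.2 := by
  simp [polyPts]

instance : IsTrans Pt (fun p q : Pt => p.2 < q.2) := ⟨fun _ _ _ h1 h2 => lt_trans h1 h2⟩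

lemma mono_pairwise {l : List Pt} (h : MonoPath l) : l.Pairwise (fun p q : Pt => p.2 < q.2) :=
  List.isChain_iff_pairwise.mp h

lemma mono_nodup {l : List Pt} (h : MonoPath l) : l.Nodup :=
  (mono_pairwise h).imp (fun hlt => by intro he; rw [he] at hlt; exact lt_irrefl _ hlt)

lemma mono_tail {a : Pt} {l : List Pt} (h : MonoPath (a :: l)) : MonoPath l := h.tail

lemma mono_head_le {l : List Pt} {a x : Pt} (h : MonoPath l) (ha : l.head? = some a)
    (hx : x ∈ l) : a.2 ≤ x.2 := by
  cases l with
  | nil => simp at ha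
  | cons b t =>
    simp only [List.head?_cons, Option.some_inj] at ha
    subst ha
    rcases List.mem_cons.mp hx with h' | h'
    · exact le_of_eq (by rw [h'])
    · exact le_of_lt (List.rel_of_pairwise_cons (mono_pairwise h) h')

lemma last_mem' {l : List Pt} {a : Pt} (h : l.getLast? = some a) : a ∈ l := by
  obtain ⟨hne, he⟩ := List.mem_getLast?_eq_getLast (Option.mem_def.mpr h)
  rw [he]; exact List.getLast_mem hne

lemma mono_last_ge {l : List Pt} {b x : Pt} (h : MonoPath l) (hb : l.getLast? = some b)
    (hx : x ∈ l) : x.2 ≤ b.2 := by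
  induction l with
  | nil => simp at hx
  | cons a t ih =>
    cases t with
    | nil =>
      simp only [List.getLast?_singleton, Option.some_inj] at hb
      simp at hx; rw [hx, ← hb]
    | cons c t' =>
      rw [List.getLast?_cons_cons] at hb
      rcases List.mem_cons.mp hx with h' | h'
      · subst h'
        have hbm : b ∈ c :: t' := last_mem' hb
        exact le_of_lt (List.rel_of_pairwise_cons (mono_pairwise h) hbm)
      · exact ih (mono_tail h) hb h'

lemma mono_edge_lt {l : List Pt} {e : Pt × Pt} (h : MonoPath l) (he : e ∈ edgesOf l) :
    e.1.2 < e.2.2 := by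
  induction l with
  | nil => simp at he
  | cons a t ih =>
    cases t with
    | nil => simp at he
    | cons b t' =>
      rw [edgesOf_cons_cons, List.mem_cons] at he
      rcases he with he | he
      · rw [he]; exact (List.isChain_cons_cons.mp h).1
      · exact ih (mono_tail h) he

lemma mono_edges_order {l : List Pt} (h : MonoPath l) :
    ∀ e ∈ edgesOf l, ∀ f ∈ edgesOf l, e ≠ f → e.2.2 ≤ f.1.2 ∨ f.2.2 ≤ e.1.2 := by
  induction l with
  | nil => simp
  | cons a t ih =>
    cases t with
    | nil => simp
    | cons b t' =>
      intro e he f hf hef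
      rw [edgesOf_cons_cons, List.mem_cons] at he hf
      rcases he with he | he <;> rcases hf with hf | hf
      · exact absurd (he.trans hf.symm) hef
      · left
        rw [he]
        exact mono_head_le (mono_tail h) rfl (mem_edges_fst hf)
      · right
        rw [hf]
        exact mono_head_le (mono_tail h) rfl (mem_edges_fst he)
      · exact ih (mono_tail h) e he f hf hef

lemma segNC_of_disjoint {e f : Pt × Pt} (he : e.1.2 < e.2.2) (hf : f.1.2 < f.2.2)
    (h : e.2.2 ≤ f.1.2) : SegNC e f := by
  intro x hxe hxf
  have h1 := seg_y_bounds hxe (le_of_lt he)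
  have h2 := seg_y_bounds hxf (le_of_lt hf)
  have hxtop : x.2 = e.2.2 := le_antisymm h1.2 (by linarith)
  have hxbot : x.2 = f.1.2 := le_antisymm (by linarith) h2.1
  exact ⟨Or.inr (seg_top_eq hxe he hxtop), Or.inl (seg_bot_eq hxf hf hxbot)⟩

lemma mono_same_chain_NC {l : List Pt} (h : MonoPath l) :
    ∀ e ∈ edgesOf l, ∀ f ∈ edgesOf l, e ≠ f → SegNC e f := by
  intro e he f hf hef
  rcases mono_edges_order h e he f hf hef with hor | hor
  · exact segNC_of_disjoint (mono_edge_lt h he) (mono_edge_lt h hf) hor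
  · intro x hxe hxf
    exact ((segNC_of_disjoint (mono_edge_lt h hf) (mono_edge_lt h he) hor) x hxf hxe).symm

lemma last_mem_polyPts {l : List Pt} {b : Pt} (h : l.getLast? = some b) (hl : 2 ≤ l.length) :
    b ∈ polyPts l := by
  induction l with
  | nil => simp at h
  | cons a t ih =>
    cases t with
    | nil => simp at hl
    | cons c t' =>
      rw [List.getLast?_cons_cons] at h
      cases t' with
      | nil =>
        have hb : b = c := (by simpa using h : c = b).symm
        subst hb
        rw [polyPts_mem]
        exact ⟨(a, b), by simp, seg_right _ _⟩
      | cons d t'' =>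
        have := ih h (by simp)
        rw [polyPts_mem] at this ⊢
        obtain ⟨e, he, hxe⟩ := this
        exact ⟨e, by rw [edgesOf_cons_cons]; exact List.mem_cons_of_mem _ he, hxe⟩

lemma head_mem {l : List Pt} {a : Pt} (h : l.head? = some a) : a ∈ l := by
  cases l with
  | nil => simp at h
  | cons b t => simp at h; simp [h]

lemma last_mem {l : List Pt} {a : Pt} (h : l.getLast? = some a) : a ∈ l := last_mem' h

/-- an edge from the head to the last element forces a two-element list -/
lemma edge_head_last {l : List Pt} {a b : Pt} (h : MonoPath l) (ha : l.head? = some a)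
    (hb : l.getLast? = some b) (he : (a, b) ∈ edgesOf l) : l = [a, b] := by
  cases l with
  | nil => simp at ha
  | cons x t =>
    simp only [List.head?_cons, Option.some_inj] at ha
    subst ha
    cases t with
    | nil => simp at he
    | cons c t' =>
      rw [edgesOf_cons_cons, List.mem_cons] at he
      rw [List.getLast?_cons_cons] at hb
      rcases he with he | he
      · have hbc : b = c := (Prod.ext_iff.mp he).2
        cases t' with
        | nil =>
          have : b = c := hbc
          simp only [this]
        | cons d t'' =>
          exfalso
          have hdm : d ∈ c :: d :: t'' := by simp
          have hd2 : d.2 ≤ b.2 := mono_last_ge (mono_tail h) hb hdm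
          have hcd : c.2 < d.2 := (List.isChain_cons_cons.mp (mono_tail h)).1
          rw [hbc] at hd2
          have hxc : x.2 < c.2 := (List.isChain_cons_cons.mp h).1
          linarith
      · exfalso
        have ham : x ∈ c :: t' := mem_edges_fst he
        have : x.2 < x.2 := List.rel_of_pairwise_cons (mono_pairwise h) ham
        exact lt_irrefl _ this

end Aux2
section Aux3

open List

/-! ### rightmost point, gift-wrapping chain, sorted lists -/

lemma exists_rightmost (o : Pt) : ∀ (T : Finset Pt), T.Nonempty →
    (∀ q ∈ T, o.2 < q.2) → ∃ m ∈ T, ∀ q ∈ T, 0 ≤ xprod o m q := by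
  classical
  intro T
  induction T using Finset.induction_on with
  | empty => intro hne _; exact absurd hne (by simp)
  | @insert a T ha ih =>
    intro hne habove
    by_cases hT : T.Nonempty
    · obtain ⟨m, hm, hmax⟩ := ih hT (fun q hq => habove q (Finset.mem_insert_of_mem hq))
      by_cases hma : 0 ≤ xprod o m a
      · refine ⟨m, Finset.mem_insert_of_mem hm, ?_⟩
        intro q hq
        rcases Finset.mem_insert.mp hq with h | h
        · rw [h]; exact hma
        · exact hmax q h
      · push_neg at hma
        have hma' : 0 < xprod o a m := by
          have := xprod_swap o m a
          linarith [xprod_swap o a m]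
        refine ⟨a, Finset.mem_insert_self _ _, ?_⟩
        intro q hq
        rcases Finset.mem_insert.mp hq with h | h
        · rw [h, xprod_self]
        · exact le_of_lt (xprod_trans (habove a (Finset.mem_insert_self _ _))
            (habove m (Finset.mem_insert_of_mem hm)) (habove q (Finset.mem_insert_of_mem h))
            hma' (hmax q h))
    · rw [Finset.not_nonempty_iff_eq_empty] at hT
      subst hT
      refine ⟨a, Finset.mem_insert_self _ _, ?_⟩
      intro q hq
      simp at hq
      rw [hq, xprod_self]

/-- gift-wrapping (rightmost-first) chain from a point up to the top -/
inductive IsRChain (S : Finset Pt) (ptop : Pt) : Pt → List Pt → Prop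
  | nil : IsRChain S ptop ptop []
  | cons (c m : Pt) (tl : List Pt) (hm : m ∈ S) (hcm : c.2 < m.2)
      (hwrap : ∀ q ∈ S, c.2 < q.2 → 0 ≤ xprod c m q)
      (htl : IsRChain S ptop m tl) : IsRChain S ptop c (m :: tl)

lemma exists_rchain (S : Finset Pt) (ptop : Pt) (hT : IsHighest S ptop) :
    ∀ k (c : Pt), c ∈ S → (S.filter (fun q => c.2 < q.2)).card ≤ k →
    ∃ ch : List Pt, IsRChain S ptop c ch := by
  classical
  intro k
  induction k with
  | zero =>
    intro c hc hcard
    have hempty : S.filter (fun q => c.2 < q.2) = ∅ := Finset.card_eq_zero.mp (le_antisymm hcard (Nat.zero_le _))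
    have hc' : c = ptop := by
      by_contra hne
      have : ptop ∈ S.filter (fun q => c.2 < q.2) := by
        rw [Finset.mem_filter]
        exact ⟨hT.1, hT.2 c hc hne⟩
      rw [hempty] at this; simp at this
    rw [hc']
    exact ⟨[], IsRChain.nil⟩
  | succ k ih =>
    intro c hc hcard
    by_cases hne : (S.filter (fun q => c.2 < q.2)).Nonempty
    · obtain ⟨m, hm, hmax⟩ := exists_rightmost c _ hne (fun q hq => (Finset.mem_filter.mp hq).2)
      rw [Finset.mem_filter] at hm
      have hsub : S.filter (fun q => m.2 < q.2) ⊂ S.filter (fun q => c.2 < q.2) := by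
        refine Finset.ssubset_iff_of_subset ?_ |>.mpr ⟨m, Finset.mem_filter.mpr ⟨hm.1, hm.2⟩, by simp⟩
        intro q hq
        rw [Finset.mem_filter] at hq ⊢
        exact ⟨hq.1, lt_trans hm.2 hq.2⟩
      have hcard' : (S.filter (fun q => m.2 < q.2)).card ≤ k := by
        have := Finset.card_lt_card hsub
        omega
      obtain ⟨tl, htl⟩ := ih m hm.1 hcard'
      exact ⟨m :: tl, IsRChain.cons c m tl hm.1 hm.2
        (fun q hq h => hmax q (Finset.mem_filter.mpr ⟨hq, h⟩)) htl⟩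
    · rw [Finset.not_nonempty_iff_eq_empty] at hne
      have hc' : c = ptop := by
        by_contra hne'
        have : ptop ∈ S.filter (fun q => c.2 < q.2) := by
          rw [Finset.mem_filter]
          exact ⟨hT.1, hT.2 c hc hne'⟩
        rw [hne] at this; simp at this
      rw [hc']
      exact ⟨[], IsRChain.nil⟩

lemma rchain_exists (S : Finset Pt) (ptop : Pt) (hT : IsHighest S ptop) (c : Pt) (hc : c ∈ S) :
    ∃ ch : List Pt, IsRChain S ptop c ch :=
  exists_rchain S ptop hT _ c hc le_rfl

lemma rchain_mem_S {S : Finset Pt} {ptop c : Pt} {ch : List Pt} (h : IsRChain S ptop c ch) :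
    ∀ x ∈ ch, x ∈ S ∧ c.2 < x.2 := by
  induction h with
  | nil => simp
  | cons c m tl hm hcm hwrap htl ih =>
    intro x hx
    rcases List.mem_cons.mp hx with h' | h'
    · rw [h']; exact ⟨hm, hcm⟩
    · obtain ⟨h1, h2⟩ := ih x h'
      exact ⟨h1, lt_trans hcm h2⟩

lemma rchain_mono {S : Finset Pt} {ptop c : Pt} {ch : List Pt} (h : IsRChain S ptop c ch) :
    MonoPath (c :: ch) := by
  induction h with
  | nil => exact List.isChain_singleton _
  | cons c m tl hm hcm hwrap htl ih =>
    exact List.isChain_cons_cons.mpr ⟨hcm, ih⟩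

lemma rchain_last {S : Finset Pt} {ptop c : Pt} {ch : List Pt} (h : IsRChain S ptop c ch) :
    (c :: ch).getLast? = some ptop := by
  induction h with
  | nil => rfl
  | cons c m tl hm hcm hwrap htl ih =>
    rw [List.getLast?_cons_cons]
    exact ih

lemma rchain_nil_of_top {S : Finset Pt} {ptop : Pt} {ch : List Pt}
    (hT : IsHighest S ptop) (h : IsRChain S ptop ptop ch) : ch = [] := by
  cases h with
  | nil => rfl
  | cons _ m tl hm hcm hwrap htl =>
    exfalso
    rcases eq_or_ne m ptop with he | he
    · rw [he] at hcm; exact lt_irrefl _ hcm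
    · exact absurd hcm (not_lt.mpr (le_of_lt (hT.2 m hm he)))

/-- sorted list of a finset with distinct y coordinates -/
lemma exists_sorted (T : Finset Pt) (hdy : ∀ p ∈ T, ∀ q ∈ T, p.2 = q.2 → p = q) :
    ∃ l : List Pt, MonoPath l ∧ (∀ p : Pt, p ∈ l ↔ p ∈ T) := by
  classical
  induction T using Finset.strongInduction with
  | _ T ih =>
    by_cases hne : T.Nonempty
    · obtain ⟨m, hm, hmin⟩ := Finset.exists_min_image T (fun p => p.2) hne
      have hsub : T.erase m ⊂ T := Finset.erase_ssubset hm
      obtain ⟨l', hl'mono, hl'mem⟩ := ih (T.erase m) hsub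
        (fun p hp q hq => hdy p (Finset.mem_of_mem_erase hp) q (Finset.mem_of_mem_erase hq))
      refine ⟨m :: l', ?_, ?_⟩
      · rw [MonoPath]; apply List.isChain_cons.mpr
        refine ⟨?_, hl'mono⟩
        intro y hy
        have hym : y ∈ l' := List.mem_of_mem_head? hy
        have hyT : y ∈ T.erase m := (hl'mem y).mp hym
        have hne' : y ≠ m := Finset.ne_of_mem_erase hyT
        have := hmin y (Finset.mem_of_mem_erase hyT)
        rcases lt_or_eq_of_le this with h | h
        · exact h
        · exact absurd (hdy y (Finset.mem_of_mem_erase hyT) m hm h.symm) hne'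
      · intro p
        rw [List.mem_cons, hl'mem p, Finset.mem_erase]
        constructor
        · rintro (h | h)
          · rw [h]; exact hm
          · exact h.2
        · intro h
          by_cases hpm : p = m
          · left; exact hpm
          · right; exact ⟨hpm, h⟩
    · rw [Finset.not_nonempty_iff_eq_empty] at hne
      subst hne
      exact ⟨[], List.isChain_nil, by simp⟩

end Aux3
section Aux4

open List

/-! ### bipath strict separation, and PolyNC from separation -/

lemma edge_ne_of_lists {L R : List Pt} {p1 : Pt} (hmL : MonoPath L)
    (hshared : ∀ p : Pt, p ∈ L → p ∈ R → p = p1)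
    {e f : Pt × Pt} (he : e ∈ edgesOf L) (hf : f ∈ edgesOf R) : e ≠ f := by
  intro hef
  have h1 : e.1 ∈ L := mem_edges_fst he
  have h2 : e.2 ∈ L := mem_edges_snd he
  have h3 : e.1 ∈ R := by rw [hef]; exact mem_edges_fst hf
  have h4 : e.2 ∈ R := by rw [hef]; exact mem_edges_snd hf
  have e1 : e.1 = p1 := hshared _ h1 h3
  have e2 : e.2 = p1 := hshared _ h2 h4
  have := mono_edge_lt hmL he
  rw [e1, e2] at this
  exact lt_irrefl _ this

lemma bipath_sep {Si : Finset Pt} {p1 : Pt} {L R : List Pt} (hB : IsBipath Si p1 L R)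
    {x y : Pt} (hx : x ∈ polyPts L) (hy : y ∈ polyPts R) (hxy : x.2 = y.2)
    (hgt : p1.2 < x.2) : x.1 < y.1 := by
  by_cases hne : x = y
  · exfalso
    obtain ⟨e, he, hxe⟩ := polyPts_mem.mp hx
    obtain ⟨f, hf, hyf⟩ := polyPts_mem.mp hy
    have hef : e ≠ f := edge_ne_of_lists hB.monoL hB.shared he hf
    have := hB.noncross e (List.mem_append_left _ he) f (List.mem_append_right _ hf) hef
      x hxe (hne ▸ hyf)
    have hxL : x ∈ L := by rcases this.1 with h | h <;> rw [h]
      <;> [exact mem_edges_fst he; exact mem_edges_snd he]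
    have hxR : x ∈ R := by rcases this.2 with h | h <;> rw [h]
      <;> [exact mem_edges_fst hf; exact mem_edges_snd hf]
    have := hB.shared x hxL hxR
    rw [this] at hgt
    exact lt_irrefl _ hgt
  · exact hB.leftOf x hx y hy hxy hgt hne

lemma cross_core {p1 ptop : Pt} {A B : List Pt} (hA : MonoPath A) (hBm : MonoPath B)
    (hA1 : A.head? = some p1) (hB1 : B.head? = some p1)
    (hA2 : A.getLast? = some ptop) (hB2 : B.getLast? = some ptop)
    (sep : ∀ x ∈ polyPts A, ∀ y ∈ polyPts B, x.2 = y.2 → p1.2 < x.2 → x.2 < ptop.2 → x.1 < y.1)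
    {e f : Pt × Pt} (he : e ∈ edgesOf A) (hf : f ∈ edgesOf B) :
    ∀ x : Pt, x ∈ Seg e.1 e.2 → x ∈ Seg f.1 f.2 →
      (x = e.1 ∨ x = e.2) ∧ (x = f.1 ∨ x = f.2) := by
  intro x hxe hxf
  have hlte := mono_edge_lt hA he
  have hltf := mono_edge_lt hBm hf
  have hbe := seg_y_bounds hxe (le_of_lt hlte)
  have hbf := seg_y_bounds hxf (le_of_lt hltf)
  have h1e : p1.2 ≤ e.1.2 := mono_head_le hA hA1 (mem_edges_fst he)
  have h1f : p1.2 ≤ f.1.2 := mono_head_le hBm hB1 (mem_edges_fst hf)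
  have h2e : e.2.2 ≤ ptop.2 := mono_last_ge hA hA2 (mem_edges_snd he)
  have h2f : f.2.2 ≤ ptop.2 := mono_last_ge hBm hB2 (mem_edges_snd hf)
  rcases eq_or_lt_of_le (le_trans h1e hbe.1) with hbot | hbot
  · have hxe1 : x = e.1 := seg_bot_eq hxe hlte (le_antisymm (hbot ▸ h1e) hbe.1)
    have hxf1 : x = f.1 := seg_bot_eq hxf hltf (le_antisymm (hbot ▸ h1f) hbf.1)
    exact ⟨Or.inl hxe1, Or.inl hxf1⟩
  · rcases eq_or_lt_of_le (le_trans hbe.2 h2e) with htop | htop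
    · have hxe2 : x = e.2 := seg_top_eq hxe hlte (le_antisymm hbe.2 (htop ▸ h2e))
      have hxf2 : x = f.2 := seg_top_eq hxf hltf (le_antisymm hbf.2 (htop ▸ h2f))
      exact ⟨Or.inr hxe2, Or.inr hxf2⟩
    · exfalso
      have hxA : x ∈ polyPts A := polyPts_mem.mpr ⟨e, he, hxe⟩
      have hxB : x ∈ polyPts B := polyPts_mem.mpr ⟨f, hf, hxf⟩
      exact lt_irrefl _ (sep x hxA x hxB rfl hbot htop)

lemma polyNC_master {p1 ptop : Pt} {A B : List Pt} (hA : MonoPath A) (hBm : MonoPath B)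
    (hA1 : A.head? = some p1) (hB1 : B.head? = some p1)
    (hA2 : A.getLast? = some ptop) (hB2 : B.getLast? = some ptop)
    (sep : ∀ x ∈ polyPts A, ∀ y ∈ polyPts B, x.2 = y.2 → p1.2 < x.2 → x.2 < ptop.2 → x.1 < y.1) :
    PolyNC A B := by
  intro e he f hf hef
  rcases List.mem_append.mp he with heA | heB <;> rcases List.mem_append.mp hf with hfA | hfB
  · exact mono_same_chain_NC hA e heA f hfA hef
  · exact fun x hxe hxf => cross_core hA hBm hA1 hB1 hA2 hB2 sep heA hfB x hxe hxf
  · intro x hxe hxf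
    have := cross_core hA hBm hA1 hB1 hA2 hB2 sep hfA heB x hxf hxe
    exact ⟨this.2, this.1⟩
  · exact mono_same_chain_NC hBm e heB f hfB hef

end Aux4
section Aux5

open List

lemma xprod_snd_self (o a : Pt) : xprod o a o = 0 := by simp [xprod]

/-- Key lemma: the left chain `L'` stays strictly left of every edge of the
gift-wrapping chain, by induction along the chain. -/
lemma sep_chain (S : Finset Pt) (hy : DistinctY S) (hgp : GenPos S)
    (p1 ptop : Pt) (hTop : IsHighest S ptop)
    (L' : List Pt) (hmL' : MonoPath L') (hheadL' : L'.head? = some p1)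
    (hlastL' : L'.getLast? = some ptop) (hvert : ∀ w ∈ L', w ∈ S)
    {c : Pt} {ch : List Pt} (hch : IsRChain S ptop c ch) :
    c ∈ S → (∀ w ∈ L', w ∈ ch → w = ptop) →
    (c = p1 ∨ ∀ w ∈ L', w ≠ c) →
    ((p1, ptop) ∈ edgesOf L' → (p1, ptop) ∈ edgesOf (c :: ch) → False) →
    (∀ x ∈ polyPts L', x.2 = c.2 → p1.2 < x.2 → x.1 < c.1) →
    ∀ e ∈ edgesOf (c :: ch), ∀ x ∈ polyPts L', ∀ y ∈ Seg e.1 e.2,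
      x.2 = y.2 → p1.2 < x.2 → x.2 < ptop.2 → x.1 < y.1 := by
  induction hch with
  | nil =>
    intro _ _ _ _ _ e he
    simp at he
  | cons c m tl hm hcm hwrap htl IH =>
    intro hcS hdis hccase hdeg hbase
    have hm_top : m.2 ≤ ptop.2 := by
      by_cases hmp : m = ptop
      · rw [hmp]
      · exact le_of_lt (hTop.2 m hm hmp)
    have hc_top : c.2 < ptop.2 := lt_of_lt_of_le hcm hm_top
    have hnn_top : 0 ≤ xprod c m ptop := hwrap ptop hTop.1 hc_top
    have hcm' : c ≠ m := fun h => by rw [h] at hcm; exact lt_irrefl _ hcm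
    -- strict leftness of L'-vertices w.r.t. the chain edge (c, m)
    have hV : ∀ w, w ∈ L' → c.2 < w.2 → w.2 < ptop.2 → 0 < xprod c m w := by
      intro w hwL hcw hwtop
      have hwS := hvert w hwL
      have hge := hwrap w hwS hcw
      have hwm : w ≠ m := by
        intro h
        have : w = ptop := hdis w hwL (by rw [h]; exact List.mem_cons_self)
        rw [this] at hwtop
        exact lt_irrefl _ hwtop
      have hwc : c ≠ w := fun h => by rw [← h] at hcw; exact lt_irrefl _ hcw
      exact lt_of_le_of_ne hge (Ne.symm (hgp c hcS m hm w hwS hcm' hwc hwm.symm))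
    -- the main edge statement for the edge (c, m)
    have hedge : ∀ x ∈ polyPts L', ∀ y ∈ Seg c m, x.2 = y.2 → p1.2 < x.2 → x.2 < ptop.2 →
        x.1 < y.1 := by
      intro x hx y hySeg hxy hgt hlt
      obtain ⟨⟨u, v⟩, huv, hxuv⟩ := polyPts_mem.mp hx
      have huv_lt : u.2 < v.2 := mono_edge_lt hmL' huv
      have huL : u ∈ L' := mem_edges_fst huv
      have hvL : v ∈ L' := mem_edges_snd huv
      have huS := hvert u huL
      have hvS := hvert v hvL
      have hup1 : p1.2 ≤ u.2 := mono_head_le hmL' hheadL' huL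
      have hvtop : v.2 ≤ ptop.2 := mono_last_ge hmL' hlastL' hvL
      have hxb := seg_y_bounds hxuv (le_of_lt huv_lt)
      have hyb := seg_y_bounds hySeg (le_of_lt hcm)
      have hxc : c.2 ≤ x.2 := by rw [hxy]; exact hyb.1
      have hxm : x.2 ≤ m.2 := by rw [hxy]; exact hyb.2
      suffices hpos : 0 < xprod c m x from lt_of_xprod_pos hySeg hcm hxy hpos
      have hvtop_eq : ¬ v.2 < ptop.2 → v = ptop := fun hvp =>
        hy v hvS ptop hTop.1 (le_antisymm hvtop (not_lt.mp hvp))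
      rcases lt_trichotomy u.2 c.2 with hu | hu | hu
      · -- u below c: use the base hypothesis at height c.2
        have hvgt : c.2 < v.2 := by
          rcases lt_or_eq_of_le (le_trans hxc hxb.2) with h | h
          · exact h
          · exfalso
            have hvc : v = c := hy v hvS c hcS h.symm
            rcases hccase with hc | hc
            · rw [hvc, hc] at huv_lt
              linarith
            · exact hc v hvL hvc
        obtain ⟨w, hwSeg, hw2⟩ := seg_point_at_height huv_lt (le_of_lt hu) (le_of_lt hvgt)
        have hwL : w ∈ polyPts L' := polyPts_mem.mpr ⟨(u, v), huv, hwSeg⟩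
        have hwlt : w.1 < c.1 := hbase w hwL hw2 (by rw [hw2]; linarith)
        have hwx : 0 < xprod c m w := by
          have hcomp : xprod c m w = (m.2 - c.2) * (c.1 - w.1) := by
            simp only [xprod]; rw [hw2]; ring
          rw [hcomp]; exact mul_pos (by linarith) (by linarith)
        have hxwv : x ∈ Seg w v := seg_sub hwSeg hxuv huv_lt (by rw [hw2]; exact hxc)
        by_cases hvp : v.2 < ptop.2
        · have hv := hV v hvL hvgt hvp
          by_cases hxv : x = v
          · rw [hxv]; exact hv
          · exact xprod_seg_pos_left hxwv hwx (le_of_lt hv) hxv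
        · have hveq := hvtop_eq hvp
          have hxv : x ≠ v := fun h => by rw [h, hveq] at hlt; exact lt_irrefl _ hlt
          exact xprod_seg_pos_left hxwv hwx (by rw [hveq]; exact hnn_top) hxv
      · -- u at the height of c: u = c, forced c = p1
        have huc : u = c := hy u huS c hcS hu
        have hcp1 : c = p1 := by
          rcases hccase with h | h
          · exact h
          · exact absurd huc (h u huL)
        have hu0 : xprod c m u = 0 := by rw [huc]; exact xprod_snd_self c m
        have hvgt : c.2 < v.2 := by rw [← hu]; exact huv_lt
        have hxu : x ≠ u := fun h => by
          rw [h, huc, hcp1] at hgt; exact lt_irrefl _ hgt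
        by_cases hvp : v.2 < ptop.2
        · exact xprod_seg_pos_right hxuv (le_of_eq hu0.symm) (hV v hvL hvgt hvp) hxu
        · have hveq := hvtop_eq hvp
          by_cases hmp : m = ptop
          · exfalso
            have e1 : (p1, ptop) ∈ edgesOf L' := by
              have := huv
              rw [huc, hcp1, hveq] at this
              exact this
            have e2 : (p1, ptop) ∈ edgesOf (c :: m :: tl) := by
              rw [edgesOf_cons_cons, hcp1, hmp] at *
              exact List.mem_cons_self
            exact hdeg e1 e2
          · have hc_ptop : c ≠ ptop := fun h => by rw [h] at hc_top; exact lt_irrefl _ hc_top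
            have hmtop : 0 < xprod c m ptop :=
              lt_of_le_of_ne hnn_top (Ne.symm (hgp c hcS m hm ptop hTop.1 hcm' hc_ptop hmp))
            exact xprod_seg_pos_right hxuv (le_of_eq hu0.symm) (by rw [hveq]; exact hmtop) hxu
      · -- u strictly above c
        have hu_pos : 0 < xprod c m u := hV u huL hu (lt_of_lt_of_le huv_lt hvtop)
        by_cases hvp : v.2 < ptop.2
        · have hv := hV v hvL (lt_trans hu huv_lt) hvp
          by_cases hxv : x = v
          · rw [hxv]; exact hv
          · exact xprod_seg_pos_left hxuv hu_pos (le_of_lt hv) hxv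
        · have hveq := hvtop_eq hvp
          have hxv : x ≠ v := fun h => by rw [h, hveq] at hlt; exact lt_irrefl _ hlt
          exact xprod_seg_pos_left hxuv hu_pos (by rw [hveq]; exact hnn_top) hxv
    -- dispatch the two kinds of edges
    intro e he x hx y hy' hxy hgt hlt
    rw [edgesOf_cons_cons, List.mem_cons] at he
    rcases he with he | he
    · rw [he] at hy'
      exact hedge x hx y hy' hxy hgt hlt
    · by_cases hmp : m = ptop
      · exfalso
        rw [hmp] at htl
        rw [rchain_nil_of_top hTop htl, hmp] at he
        simp at he
      · have hm2 : m.2 < ptop.2 := hTop.2 m hm hmp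
        exact IH hm (fun w hw hwtl => hdis w hw (List.mem_cons_of_mem _ hwtl))
          (Or.inr fun w hw hwm => by
            have : w = ptop := hdis w hw (by rw [hwm]; exact List.mem_cons_self)
            rw [this] at hwm
            exact hmp hwm.symm)
          (fun h1 h2 => hdeg h1 (by rw [edgesOf_cons_cons]; exact List.mem_cons_of_mem _ h2))
          (fun x' hx' hxm hgt' => hedge x' hx' m (seg_right c m) hxm hgt'
            (by rw [hxm]; exact hm2))
          e he x hx y hy' hxy hgt hlt

end Aux5
section Aux6

open List

lemma list_single_of {l : List Pt} {a : Pt} (h : l.head? = some a)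
    (hall : ∀ w ∈ l, w = a) (hnd : l.Nodup) : l = [a] := by
  cases l with
  | nil => simp at h
  | cons x t =>
    simp only [List.head?_cons, Option.some_inj] at h
    subst h
    cases t with
    | nil => rfl
    | cons b t' =>
      exfalso
      have hb : b = x := hall b (by simp)
      rw [List.nodup_cons] at hnd
      exact hnd.1 (by rw [← hb]; simp)

lemma length_two_le {l : List Pt} {a b : Pt} (hh : l.head? = some a)
    (hl : l.getLast? = some b) (hne : a ≠ b) : 2 ≤ l.length := by
  cases l with
  | nil => simp at hh
  | cons x t =>
    cases t with
    | nil =>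
      exfalso
      simp only [List.head?_cons, Option.some_inj] at hh
      have : x = b := by simpa using hl
      exact hne (hh ▸ this)
    | cons y t' => simp

lemma core (S : Finset Pt) (hy : DistinctY S) (hgp : GenPos S)
    (p1 ptop : Pt) (h1 : IsLowest S p1) (hT : IsHighest S ptop)
    (Si : Finset Pt) (hSis : Si ⊆ S) (hUne : (S \ Si).Nonempty)
    (hSilow : ∀ p ∈ Si, ∀ q ∈ S, q ∉ Si → p.2 < q.2)
    (L R : List Pt) (hB : IsBipath Si p1 L R)
    (pl pr : Pt) (hpl : L.getLast? = some pl) (hpr : R.getLast? = some pr)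
    (hsafe : (pl = p1 ∧ pr = p1) ∨
      (pr.2 < pl.2 ∧ ∃ r ∈ S, pr.2 < r.2 ∧ r.2 ≤ pl.2 ∧
        (∀ q ∈ S, pr.2 < q.2 → q.2 ≤ pl.2 → 0 ≤ xprod pr r q) ∧
        ∃ z ∈ S, xprod pr r z < 0 ∧ pl.2 < z.2)) :
    ∃ L' R' : List Pt, ExtendsTo S Si p1 ptop L R L' R' := by
  classical
  -- basic membership facts
  have hp1S : p1 ∈ S := h1.1
  have hptopS : ptop ∈ S := hT.1
  have hp1L : p1 ∈ L := head_mem hB.headL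
  have hp1R : p1 ∈ R := head_mem hB.headR
  have hp1Si : p1 ∈ Si := (hB.cover p1).mpr (Or.inl hp1L)
  have hplL : pl ∈ L := last_mem hpl
  have hplSi : pl ∈ Si := (hB.cover pl).mpr (Or.inl hplL)
  have hplS : pl ∈ S := hSis hplSi
  have hprR : pr ∈ R := last_mem hpr
  have hprSi : pr ∈ Si := (hB.cover pr).mpr (Or.inr hprR)
  have hprS : pr ∈ S := hSis hprSi
  have hptopSi : ptop ∉ Si := by
    intro hmem
    obtain ⟨u0, hu0⟩ := hUne
    rw [Finset.mem_sdiff] at hu0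
    have h2 := hSilow ptop hmem u0 hu0.1 hu0.2
    have hne : u0 ≠ ptop := fun h => by rw [h] at hu0; exact hu0.2 hmem
    have := hT.2 u0 hu0.1 hne
    linarith
  have hp1ptop : p1 ≠ ptop := fun h => hptopSi (h ▸ hp1Si)
  have hlow : ∀ q ∈ S, p1.2 ≤ q.2 := by
    intro q hq
    by_cases h : q = p1
    · rw [h]
    · exact le_of_lt (h1.2 q hq h)
  have hprpl : pr.2 ≤ pl.2 := by
    rcases hsafe with ⟨h1', h2'⟩ | ⟨h, _⟩
    · rw [h1', h2']
    · exact le_of_lt h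
  have hLle : ∀ w ∈ L, w.2 ≤ pl.2 := fun w hw => mono_last_ge hB.monoL hpl hw
  have hRle : ∀ w ∈ R, w.2 ≤ pr.2 := fun w hw => mono_last_ge hB.monoR hpr hw
  have hSile : ∀ q ∈ Si, q.2 ≤ pl.2 := by
    intro q hq
    rcases (hB.cover q).mp hq with h | h
    · exact hLle q h
    · exact le_trans (hRle q h) hprpl
  have hupper : ∀ q ∈ S, q ∉ Si → pl.2 < q.2 := hSilow pl hplSi
  have hplptop : pl.2 < ptop.2 := hupper ptop hptopS hptopSi
  have hLS : ∀ w ∈ L, w ∈ S := fun w hw => hSis ((hB.cover w).mpr (Or.inl hw))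
  have hRS : ∀ w ∈ R, w ∈ S := fun w hw => hSis ((hB.cover w).mpr (Or.inr hw))
  -- the degenerate two-point case
  by_cases hS2 : S = {p1, ptop}
  · have hSi1 : Si = {p1} := by
      apply Finset.ext
      intro q
      simp only [Finset.mem_singleton]
      constructor
      · intro hq
        have := hSis hq
        rw [hS2] at this
        simp only [Finset.mem_insert, Finset.mem_singleton] at this
        rcases this with h | h
        · exact h
        · exact absurd (h ▸ hq) hptopSi
      · intro h; rw [h]; exact hp1Si
    have hLall : ∀ w ∈ L, w = p1 := by
      intro w hw
      have : w ∈ Si := (hB.cover w).mpr (Or.inl hw)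
      rw [hSi1] at this; simpa using this
    have hRall : ∀ w ∈ R, w = p1 := by
      intro w hw
      have : w ∈ Si := (hB.cover w).mpr (Or.inr hw)
      rw [hSi1] at this; simpa using this
    have hL1 : L = [p1] := list_single_of hB.headL hLall hB.nodupL
    have hR1 : R = [p1] := list_single_of hB.headR hRall hB.nodupR
    have hlt : p1.2 < ptop.2 := h1.2 ptop hptopS (Ne.symm hp1ptop)
    refine ⟨[p1, ptop], [p1, ptop], ?_, ?_, ?_, ?_, ?_⟩
    · constructor
      · exact List.isChain_cons_cons.mpr ⟨hlt, List.isChain_singleton _⟩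
      · exact List.isChain_cons_cons.mpr ⟨hlt, List.isChain_singleton _⟩
      · rfl
      · rfl
      · rfl
      · rfl
      · simp [hp1ptop]
      · simp [hp1ptop]
      · intro p
        rw [hS2]
        constructor
        · intro hp; left; simpa using hp
        · intro hp
          rcases hp with hp | hp <;> simpa using hp
      · intro p hp _
        simpa using hp
      · intro e he f hf hef
        exfalso
        have he' : e = (p1, ptop) := by
          rcases List.mem_append.mp he with h | h <;> simpa using h
        have hf' : f = (p1, ptop) := by
          rcases List.mem_append.mp hf with h | h <;> simpa using h
        exact hef (he'.trans hf'.symm)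
    · rw [hL1]; exact ⟨[ptop], rfl⟩
    · rw [hR1]; exact ⟨[ptop], rfl⟩
    · intro p hp
      rw [hSi1, hL1]
      simp only [Finset.mem_singleton, List.mem_singleton]
    · intro p hp
      rw [hSi1, hR1]
      simp only [Finset.mem_singleton, List.mem_singleton]
  -- main case: build the gift-wrapping chain from pr
  obtain ⟨ch, hch0⟩ := rchain_exists S ptop hT pr hprS
  have hprptop : pr ≠ ptop := fun h => hptopSi (h ▸ hprSi)
  cases hch0 with
  | nil => exact absurd rfl hprptop
  | cons _ m tl hm hcm hwrap htl =>
  have hch : IsRChain S ptop pr (m :: tl) := IsRChain.cons pr m tl hm hcm hwrap htl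
  -- the first chain point is above pl (this is where safety is used)
  have hplm : pl.2 < m.2 := by
    by_contra hcon
    push_neg at hcon
    rcases hsafe with ⟨hpl1, hpr1⟩ | ⟨hlt, r, hrS, hr1, hr2, hband, z, hzS, hz1, hz2⟩
    · rw [hpl1] at hcon
      rw [hpr1] at hcm
      linarith [hlow m hm]
    · have hrm : 0 ≤ xprod pr r m := hband m hm hcm hcon
      have hmr : 0 ≤ xprod pr m r := hwrap r hrS hr1
      by_cases hreq : r = m
      · rw [hreq] at hz1
        have : 0 ≤ xprod pr m z := hwrap z hzS (by linarith)
        linarith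
      · have hne0 := hgp pr hprS r hrS m hm
          (fun h => by rw [← h] at hr1; exact lt_irrefl _ hr1)
          (fun h => by rw [← h] at hcm; exact lt_irrefl _ hcm) hreq
        have := xprod_swap pr m r
        have : xprod pr r m = 0 := by linarith
        exact hne0 this
  have hchS : ∀ x ∈ m :: tl, x ∈ S := fun x hx => (rchain_mem_S hch x hx).1
  have hch_above : ∀ x ∈ m :: tl, pl.2 < x.2 := by
    intro x hx
    rcases List.mem_cons.mp hx with h | h
    · rw [h]; exact hplm
    · have := (rchain_mem_S htl x h).2
      linarith
  have hchSi : ∀ x ∈ m :: tl, x ∉ Si := by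
    intro x hx hmem
    have := hSile x hmem
    have := hch_above x hx
    linarith
  have hptop_ch : ptop ∈ m :: tl := by
    have hl := rchain_last hch
    rw [List.getLast?_cons_cons] at hl
    exact last_mem hl
  -- the skipped points
  set Kset : Finset Pt := (S \ Si).filter (fun p => p ∉ (m :: tl)) with hKdef
  have hKfacts : ∀ x ∈ Kset, x ∈ S ∧ x ∉ Si ∧ x ∉ (m :: tl) := by
    intro x hx
    rw [hKdef, Finset.mem_filter, Finset.mem_sdiff] at hx
    exact ⟨hx.1.1, hx.1.2, hx.2⟩
  have hKmem : ∀ x, x ∈ Kset ↔ (x ∈ S ∧ x ∉ Si ∧ x ∉ (m :: tl)) := by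
    intro x
    rw [hKdef, Finset.mem_filter, Finset.mem_sdiff]
    tauto
  have hK_above : ∀ x ∈ Kset, pl.2 < x.2 := fun x hx =>
    hupper x (hKfacts x hx).1 (hKfacts x hx).2.1
  have hK_top : ∀ x ∈ Kset, x.2 < ptop.2 := by
    intro x hx
    have hne : x ≠ ptop := fun h => (hKfacts x hx).2.2 (h ▸ hptop_ch)
    exact hT.2 x (hKfacts x hx).1 hne
  obtain ⟨sK, hsKmono, hsKmem⟩ := exists_sorted Kset
    (fun p hp q hq => hy p (hKfacts p hp).1 q (hKfacts q hq).1)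
  -- the two lists
  set L' : List Pt := L ++ (sK ++ [ptop]) with hL'def
  set R' : List Pt := R ++ (m :: tl) with hR'def
  have hsK_above : ∀ x ∈ sK, pl.2 < x.2 := fun x hx => hK_above x ((hsKmem x).mp hx)
  have hsK_top : ∀ x ∈ sK, x.2 < ptop.2 := fun x hx => hK_top x ((hsKmem x).mp hx)
  have hmono_sk1 : MonoPath (sK ++ [ptop]) := by
    apply List.IsChain.append hsKmono (List.isChain_singleton _)
    intro a ha b hb
    have ha' : a ∈ sK := List.mem_of_mem_getLast? ha
    have hb' : b = ptop := (by simpa using hb : ptop = b).symm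
    rw [hb']
    exact hsK_top a ha'
  have hmonoL' : MonoPath L' := by
    apply List.IsChain.append hB.monoL hmono_sk1
    intro a ha b hb
    have ha' : a = pl := by
      rw [Option.mem_def, hpl] at ha
      exact (Option.some_inj.mp ha).symm
    have hb' : b ∈ sK ++ [ptop] := List.mem_of_mem_head? hb
    rw [ha']
    rcases List.mem_append.mp hb' with h | h
    · exact hsK_above b h
    · have : b = ptop := by simpa using h
      rw [this]; exact hplptop
  have hmonoR' : MonoPath R' := by
    apply List.IsChain.append hB.monoR (mono_tail (rchain_mono hch))
    intro a ha b hb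
    have ha' : a = pr := by
      rw [Option.mem_def, hpr] at ha
      exact (Option.some_inj.mp ha).symm
    have hb' : b = m := (by simpa using hb : m = b).symm
    rw [ha', hb']
    exact hcm
  have hheadL' : L'.head? = some p1 := by
    rw [hL'def]
    cases hL : L with
    | nil => rw [hL] at hp1L; simp at hp1L
    | cons a t =>
      rw [hL] at hB
      have := hB.headL
      simp only [List.head?_cons, Option.some_inj] at this
      simp [this]
  have hheadR' : R'.head? = some p1 := by
    rw [hR'def]
    cases hR : R with
    | nil => rw [hR] at hp1R; simp at hp1R
    | cons a t =>
      rw [hR] at hB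
      have := hB.headR
      simp only [List.head?_cons, Option.some_inj] at this
      simp [this]
  have hlastL' : L'.getLast? = some ptop := by
    rw [hL'def]
    have h2 : ptop ∈ (sK ++ [ptop]).getLast? :=
      List.mem_getLast?_append_of_mem_getLast? (by rfl)
    have h3 : ptop ∈ (L ++ (sK ++ [ptop])).getLast? :=
      List.mem_getLast?_append_of_mem_getLast? h2
    exact Option.mem_def.mp h3
  have hlastch : (m :: tl).getLast? = some ptop := by
    have := rchain_last hch
    rwa [List.getLast?_cons_cons] at this
  have hlastR' : R'.getLast? = some ptop := by
    rw [hR'def]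
    exact Option.mem_def.mp
      (List.mem_getLast?_append_of_mem_getLast? (Option.mem_def.mpr hlastch))
  have hvertL' : ∀ w ∈ L', w ∈ S := by
    intro w hw
    rw [hL'def] at hw
    rcases List.mem_append.mp hw with h | h
    · exact hLS w h
    · rcases List.mem_append.mp h with h | h
      · exact (hKfacts w ((hsKmem w).mp h)).1
      · have : w = ptop := by simpa using h
        rw [this]; exact hptopS
  have hvertR' : ∀ w ∈ R', w ∈ S := by
    intro w hw
    rw [hR'def] at hw
    rcases List.mem_append.mp hw with h | h
    · exact hRS w h
    · exact hchS w h
  -- edge decompositions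
  have hedgesL' : edgesOf L' = edgesOf L ++ edgesOf (pl :: (sK ++ [ptop])) := by
    rw [hL'def]; exact edgesOf_append hpl
  have hedgesR' : edgesOf R' = edgesOf R ++ edgesOf (pr :: m :: tl) := by
    rw [hR'def]; exact edgesOf_append hpr
  have hnew_left_high : ∀ w ∈ pl :: (sK ++ [ptop]), pl.2 ≤ w.2 := by
    intro w hw
    rcases List.mem_cons.mp hw with h | h
    · rw [h]
    · rcases List.mem_append.mp h with h | h
      · exact le_of_lt (hsK_above w h)
      · have : w = ptop := by simpa using h
        rw [this]; exact le_of_lt hplptop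
  -- membership in polyPts L at low heights
  have hpolyL_low : ∀ x ∈ polyPts L', x.2 < pl.2 → x ∈ polyPts L := by
    intro x hx hxlt
    obtain ⟨g, hg, hxg⟩ := polyPts_mem.mp hx
    rw [hedgesL'] at hg
    rcases List.mem_append.mp hg with h | h
    · exact polyPts_mem.mpr ⟨g, h, hxg⟩
    · exfalso
      have h1 : pl.2 ≤ g.1.2 := hnew_left_high g.1 (mem_edges_fst h)
      have hlt := mono_edge_lt (List.isChain_cons.mpr ⟨fun y hy => by
        have : y ∈ sK ++ [ptop] := List.mem_of_mem_head? hy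
        rcases List.mem_append.mp this with h' | h'
        · exact hsK_above y h'
        · have : y = ptop := by simpa using h'
          rw [this]; exact hplptop, hmono_sk1⟩) h
      have := (seg_y_bounds hxg (le_of_lt hlt)).1
      linarith
  -- the separation property
  have hsep : ∀ x ∈ polyPts L', ∀ y ∈ polyPts R', x.2 = y.2 → p1.2 < x.2 →
      x.2 < ptop.2 → x.1 < y.1 := by
    intro x hx y hyP hxy hgt hlt
    obtain ⟨f, hf, hyf⟩ := polyPts_mem.mp hyP
    rw [hedgesR'] at hf
    rcases List.mem_append.mp hf with hfR | hfC
    · -- y on an old R edge: heights at most pr.2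
      have hf2 : f.2.2 ≤ pr.2 := hRle f.2 (mem_edges_snd hfR)
      have hylt := (seg_y_bounds hyf (le_of_lt (mono_edge_lt hB.monoR hfR))).2
      have hxle : x.2 ≤ pr.2 := by rw [hxy]; linarith
      have hxltpl : x.2 < pl.2 := by
        rcases lt_or_eq_of_le (le_trans hxle hprpl) with h | h
        · exact h
        · exfalso
          rcases hsafe with ⟨hpl1, hpr1⟩ | ⟨hlt2, _⟩
          · rw [hpl1] at h; linarith
          · linarith
      have hxL : x ∈ polyPts L := hpolyL_low x hx hxltpl
      have hyR : y ∈ polyPts R := polyPts_mem.mpr ⟨f, hfR, hyf⟩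
      exact bipath_sep hB hxL hyR hxy hgt
    · -- y on a chain edge: use sep_chain
      have hdis : ∀ w ∈ L', w ∈ (m :: tl) → w = ptop := by
        intro w hw hwch
        rw [hL'def] at hw
        rcases List.mem_append.mp hw with h | h
        · exfalso
          have := hLle w h
          have := hch_above w hwch
          linarith
        · rcases List.mem_append.mp h with h | h
          · exact absurd hwch (hKfacts w ((hsKmem w).mp h)).2.2
          · simpa using h
      have hccase : pr = p1 ∨ ∀ w ∈ L', w ≠ pr := by
        by_cases hpp : pr = p1
        · exact Or.inl hpp
        · refine Or.inr ?_
          intro w hw hwpr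
          rw [hL'def] at hw
          rcases List.mem_append.mp hw with h | h
          · exact hpp (hB.shared pr (hwpr ▸ h) hprR)
          · rcases List.mem_append.mp h with h | h
            · exact (hKfacts w ((hsKmem w).mp h)).2.1 (hwpr ▸ hprSi)
            · have : w = ptop := by simpa using h
              exact hprptop (by rw [← hwpr, this])
      have hdeg : (p1, ptop) ∈ edgesOf L' → (p1, ptop) ∈ edgesOf (pr :: m :: tl) → False := by
        intro h1 h2
        -- from h2 : p1 = pr and the chain is [p1, ptop]
        have hp1pr : p1 = pr := by
          have := mem_edges_fst h2
          rcases List.mem_cons.mp this with h | h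
          · exact h
          · exfalso
            have := hch_above p1 h
            have := hlow pl hplS
            linarith
        have hchain2 : (pr :: m :: tl) = [p1, ptop] := by
          apply edge_head_last (rchain_mono hch) _ (rchain_last hch) h2
          rw [← hp1pr]; rfl
        have hL2 : L' = [p1, ptop] := edge_head_last hmonoL' hheadL' hlastL' h1
        -- then S = {p1, ptop}, contradiction
        have hm_top : m = ptop := by
          have := hchain2
          simp only [List.cons.injEq] at this
          exact this.2.1
        have htl_nil : tl = [] := by
          have := hchain2
          simp only [List.cons.injEq] at this
          exact this.2.2
        have hLsK : L ++ sK = [p1] := by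
          have : (L ++ sK) ++ [ptop] = [p1] ++ [ptop] := by
            rw [hL'def] at hL2
            rw [← List.append_assoc] at hL2
            simpa using hL2
          exact List.append_cancel_right this
        have hLnil : L = [p1] ∧ sK = [] := by
          cases hL : L with
          | nil => rw [hL] at hp1L; simp at hp1L
          | cons a t =>
            rw [hL] at hLsK
            simp only [List.cons_append, List.cons.injEq] at hLsK
            obtain ⟨ha, ht⟩ := hLsK
            have := List.append_eq_nil_iff.mp ht
            exact ⟨by rw [ha, this.1], this.2⟩
        have hplp1 : pl = p1 := by
          have h' := hpl
          rw [hLnil.1] at h'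
          exact (by simpa using h' : p1 = pl).symm
        apply hS2
        apply Finset.ext
        intro q
        simp only [Finset.mem_insert, Finset.mem_singleton]
        constructor
        · intro hq
          by_cases hqSi : q ∈ Si
          · left
            have h1' := hSile q hqSi
            rw [hplp1] at h1'
            exact hy q (hSis hqSi) p1 hp1S (le_antisymm h1' (hlow q (hSis hqSi)))
          · right
            have hqch : q ∈ m :: tl := by
              by_contra hqch
              have : q ∈ Kset := (hKmem q).mpr ⟨hq, hqSi, hqch⟩
              have : q ∈ sK := (hsKmem q).mpr this
              rw [hLnil.2] at this
              simp at this
            rw [hm_top, htl_nil] at hqch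
            simpa using hqch
        · intro hq
          rcases hq with h | h
          · rw [h]; exact hp1S
          · rw [h]; exact hptopS
      have hbase : ∀ x' ∈ polyPts L', x'.2 = pr.2 → p1.2 < x'.2 → x'.1 < pr.1 := by
        intro x' hx' hx'2 hx'gt
        have hprp1 : pr ≠ p1 := fun h => by rw [h] at hx'2; rw [hx'2] at hx'gt; exact lt_irrefl _ hx'gt
        have hprlt : pr.2 < pl.2 := by
          rcases hsafe with ⟨_, hpr1⟩ | ⟨h, _⟩
          · exact absurd hpr1 hprp1
          · exact h
        have hx'L : x' ∈ polyPts L := hpolyL_low x' hx' (by rw [hx'2]; exact hprlt)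
        have hprpoly : pr ∈ polyPts R :=
          last_mem_polyPts hpr (length_two_le hB.headR hpr (fun h => hprp1 h.symm))
        exact bipath_sep hB hx'L hprpoly hx'2 hx'gt
      exact sep_chain S hy hgp p1 ptop hT L' hmonoL' hheadL' hlastL' hvertL' hch hprS
        hdis hccase hdeg hbase f hfC x hx y hyf hxy hgt hlt
  -- now assemble everything
  refine ⟨L', R', ⟨?_, ?_, hheadL', hheadR', hlastL', hlastR', mono_nodup hmonoL',
    mono_nodup hmonoR', ?_, ?_, ?_⟩, ?_, ?_, ?_, ?_⟩
  · exact hmonoL'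
  · exact hmonoR'
  · -- cover
    intro p
    constructor
    · intro hp
      by_cases hpSi : p ∈ Si
      · rcases (hB.cover p).mp hpSi with h | h
        · exact Or.inl (by rw [hL'def]; exact List.mem_append_left _ h)
        · exact Or.inr (by rw [hR'def]; exact List.mem_append_left _ h)
      · by_cases hpch : p ∈ m :: tl
        · exact Or.inr (by rw [hR'def]; exact List.mem_append_right _ hpch)
        · have : p ∈ Kset := (hKmem p).mpr ⟨hp, hpSi, hpch⟩
          have : p ∈ sK := (hsKmem p).mpr this
          exact Or.inl (by
            rw [hL'def]
            exact List.mem_append_right _ (List.mem_append_left _ this))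
    · intro hp
      rcases hp with hp | hp
      · exact hvertL' p hp
      · exact hvertR' p hp
  · -- shared
    intro p hpL hpR
    rw [hL'def] at hpL
    rw [hR'def] at hpR
    rcases List.mem_append.mp hpL with h | h
    · rcases List.mem_append.mp hpR with h' | h'
      · exact Or.inl (hB.shared p h h')
      · exfalso
        have := hLle p h
        have := hch_above p h'
        linarith
    · rcases List.mem_append.mp h with h | h
      · exfalso
        rcases List.mem_append.mp hpR with h' | h'
        · exact (hKfacts p ((hsKmem p).mp h)).2.1 ((hB.cover p).mpr (Or.inr h'))
        · exact (hKfacts p ((hsKmem p).mp h)).2.2 h'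
      · exact Or.inr (by simpa using h)
  · -- noncross
    exact polyNC_master hmonoL' hmonoR' hheadL' hheadR' hlastL' hlastR' hsep
  · rw [hL'def]; exact ⟨sK ++ [ptop], rfl⟩
  · rw [hR'def]; exact ⟨m :: tl, rfl⟩
  · -- restriction to L
    intro p hp
    rw [hL'def] at hp
    rcases List.mem_append.mp hp with h | h
    · exact ⟨fun _ => h, fun _ => (hB.cover p).mpr (Or.inl h)⟩
    · constructor
      · intro hpSi
        exfalso
        rcases List.mem_append.mp h with h' | h'
        · exact (hKfacts p ((hsKmem p).mp h')).2.1 hpSi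
        · have : p = ptop := by simpa using h'
          exact hptopSi (this ▸ hpSi)
      · intro hpL
        exact (hB.cover p).mpr (Or.inl hpL)
  · -- restriction to R
    intro p hp
    rw [hR'def] at hp
    rcases List.mem_append.mp hp with h | h
    · exact ⟨fun _ => h, fun _ => (hB.cover p).mpr (Or.inr h)⟩
    · constructor
      · intro hpSi
        exact absurd hpSi (hchSi p h)
      · intro hpR
        exact absurd ((hB.cover p).mpr (Or.inr hpR)) (hchSi p h)

end Aux6
section Aux7

open List

/-! ### reflection in the y-axis -/

def negx : Pt → Pt := fun p => (-p.1, p.2)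

@[simp] lemma negx_invol (p : Pt) : negx (negx p) = p := by simp [negx]

lemma negx_inj : Function.Injective negx := by
  intro p q h
  have := congrArg negx h
  simpa using this

@[simp] lemma negx_snd (p : Pt) : (negx p).2 = p.2 := rfl

@[simp] lemma negx_fst (p : Pt) : (negx p).1 = -p.1 := rfl

lemma xprod_negx (o a b : Pt) : xprod (negx o) (negx a) (negx b) = - xprod o a b := by
  simp [negx, xprod]; ring

lemma seg_negx {p q x : Pt} (h : x ∈ Seg p q) : negx x ∈ Seg (negx p) (negx q) := by
  rw [seg_iff] at h ⊢
  obtain ⟨t, h0, h1, hx1, hx2⟩ := h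
  exact ⟨t, h0, h1, by simp [hx1]; ring, by simp [hx2]⟩

lemma seg_negx_iff {p q x : Pt} : x ∈ Seg (negx p) (negx q) ↔ negx x ∈ Seg p q := by
  constructor
  · intro h
    have := seg_negx h
    simpa using this
  · intro h
    have := seg_negx h
    simpa using this

lemma mem_map_negx {l : List Pt} {x : Pt} : x ∈ l.map negx ↔ negx x ∈ l := by
  constructor
  · intro h
    obtain ⟨y, hy, hxy⟩ := List.mem_map.mp h
    rw [← hxy]
    simpa using hy
  · intro h
    exact List.mem_map.mpr ⟨negx x, h, by simp⟩

lemma edgesOf_map (f : Pt → Pt) (l : List Pt) :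
    edgesOf (l.map f) = (edgesOf l).map (fun e => (f e.1, f e.2)) := by
  induction l with
  | nil => rfl
  | cons a t ih =>
    cases t with
    | nil => rfl
    | cons b t' =>
      have h' := ih
      simp only [List.map_cons, edgesOf_cons_cons] at h' ⊢
      simp [h']

lemma mem_edges_map {l : List Pt} {e : Pt × Pt} :
    e ∈ edgesOf (l.map negx) ↔ ∃ e₀ ∈ edgesOf l, e = (negx e₀.1, negx e₀.2) := by
  rw [edgesOf_map]
  simp only [List.mem_map]
  constructor
  · rintro ⟨e₀, h1, h2⟩; exact ⟨e₀, h1, h2.symm⟩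
  · rintro ⟨e₀, h1, h2⟩; exact ⟨e₀, h1, h2.symm⟩

lemma mono_map_negx {l : List Pt} (h : MonoPath l) : MonoPath (l.map negx) := by
  rw [MonoPath]
  exact (List.isChain_map negx).mpr h

lemma polyPts_map_negx {l : List Pt} {x : Pt} (h : x ∈ polyPts (l.map negx)) :
    negx x ∈ polyPts l := by
  rw [polyPts_mem] at h ⊢
  obtain ⟨e, he, hxe⟩ := h
  obtain ⟨e₀, he₀, hee⟩ := mem_edges_map.mp he
  rw [hee] at hxe
  exact ⟨e₀, he₀, seg_negx_iff.mp hxe⟩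

lemma segNC_negx {e f : Pt × Pt} (h : SegNC e f) :
    SegNC (negx e.1, negx e.2) (negx f.1, negx f.2) := by
  intro x hx1 hx2
  simp only at hx1 hx2
  have h1 := seg_negx_iff.mp hx1
  have h2 := seg_negx_iff.mp hx2
  obtain ⟨ha, hb⟩ := h (negx x) h1 h2
  constructor
  · rcases ha with h' | h'
    · left; show x = negx e.1; rw [← negx_invol x, h']
    · right; show x = negx e.2; rw [← negx_invol x, h']
  · rcases hb with h' | h'
    · left; show x = negx f.1; rw [← negx_invol x, h']
    · right; show x = negx f.2; rw [← negx_invol x, h']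

lemma polyNC_negx {A B : List Pt} (h : PolyNC A B) : PolyNC (B.map negx) (A.map negx) := by
  intro e he f hf hef
  have trans : ∀ g, g ∈ edgesOf (B.map negx) ++ edgesOf (A.map negx) →
      ∃ g₀ ∈ edgesOf A ++ edgesOf B, g = (negx g₀.1, negx g₀.2) := by
    intro g hg
    rcases List.mem_append.mp hg with h' | h'
    · obtain ⟨g₀, h1, h2⟩ := mem_edges_map.mp h'
      exact ⟨g₀, List.mem_append_right _ h1, h2⟩
    · obtain ⟨g₀, h1, h2⟩ := mem_edges_map.mp h'
      exact ⟨g₀, List.mem_append_left _ h1, h2⟩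
  obtain ⟨e₀, he₀, hee⟩ := trans e he
  obtain ⟨f₀, hf₀, hff⟩ := trans f hf
  have hne : e₀ ≠ f₀ := by
    intro hc
    rw [hc] at hee
    exact hef (hee.trans hff.symm)
  have := segNC_negx (h e₀ he₀ f₀ hf₀ hne)
  rw [hee, hff]
  exact this

end Aux7
section Aux8

open List

lemma mem_image_negx {T : Finset Pt} {x : Pt} : x ∈ T.image negx ↔ negx x ∈ T := by
  constructor
  · intro h
    obtain ⟨y, hy, hxy⟩ := Finset.mem_image.mp h
    rw [← hxy]
    simpa using hy
  · intro h
    exact Finset.mem_image.mpr ⟨negx x, h, by simp⟩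

lemma hamcycle_negx {S : Finset Pt} {ps pt : Pt} {A B : List Pt}
    (h : IsNCMonoHamCycle (S.image negx) (negx ps) (negx pt) A B) :
    IsNCMonoHamCycle S ps pt (B.map negx) (A.map negx) := by
  constructor
  · exact mono_map_negx h.monoR
  · exact mono_map_negx h.monoL
  · rw [List.head?_map, h.headR]; simp
  · rw [List.head?_map, h.headL]; simp
  · rw [List.getLast?_map, h.lastR]; simp
  · rw [List.getLast?_map, h.lastL]; simp
  · exact h.nodupR.map negx_inj
  · exact h.nodupL.map negx_inj
  · intro p
    rw [mem_map_negx, mem_map_negx]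
    have := h.cover (negx p)
    rw [mem_image_negx] at this
    simp only [negx_invol] at this
    tauto
  · intro p hp1 hp2
    rw [mem_map_negx] at hp1 hp2
    rcases h.shared (negx p) hp2 hp1 with h' | h'
    · left; rw [← negx_invol p, h', negx_invol]
    · right; rw [← negx_invol p, h', negx_invol]
  · exact polyNC_negx h.noncross

theorem stmt_11' (S : Finset Pt) (n : ℕ) (hn : S.card = n) (hy : DistinctY S)
    (hgp : GenPos S)
    (p1 ptop : Pt) (h1 : IsLowest S p1) (hT : IsHighest S ptop)
    (i : ℕ) (hi1 : 1 ≤ i) (hin : i ≤ n - 1)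
    (Si : Finset Pt) (hSis : Si ⊆ S) (hSic : Si.card = i)
    (hSilow : ∀ p ∈ Si, ∀ q ∈ S, q ∉ Si → p.2 < q.2)
    (L R : List Pt) (hB : IsBipath Si p1 L R)
    (pl pr : Pt) (hpl : L.getLast? = some pl) (hpr : R.getLast? = some pr)
    (hsafe : i = 1 ∨
      (pr.2 < pl.2 ∧ ∃ r ∈ S, pr.2 < r.2 ∧ r.2 ≤ pl.2 ∧
        (∀ q ∈ S, pr.2 < q.2 → q.2 ≤ pl.2 → 0 ≤ xprod pr r q) ∧
        ∃ z ∈ S, xprod pr r z < 0 ∧ pl.2 < z.2) ∨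
      (pl.2 < pr.2 ∧ ∃ r ∈ S, pl.2 < r.2 ∧ r.2 ≤ pr.2 ∧
        (∀ q ∈ S, pl.2 < q.2 → q.2 ≤ pr.2 → xprod pl r q ≤ 0) ∧
        ∃ z ∈ S, 0 < xprod pl r z ∧ pr.2 < z.2)) :
    ∃ L' R' : List Pt, ExtendsTo S Si p1 ptop L R L' R' := by
  have hUne : (S \ Si).Nonempty := by
    rw [Finset.sdiff_nonempty]
    intro hsub
    have hSe : S = Si := Finset.Subset.antisymm hsub hSis
    have : n = i := by rw [← hn, hSe, hSic]
    omega
  rcases hsafe with hi | hd2 | hd3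
  · -- i = 1 : the bipath is the trivial one at p1
    have hp1L : p1 ∈ L := head_mem hB.headL
    have hp1Si : p1 ∈ Si := (hB.cover p1).mpr (Or.inl hp1L)
    have hSi1 : Si = {p1} := by
      obtain ⟨a, ha⟩ := Finset.card_eq_one.mp (by rw [hSic, hi])
      rw [ha] at hp1Si ⊢
      simp only [Finset.mem_singleton] at hp1Si
      rw [hp1Si]
    have hLall : ∀ w ∈ L, w = p1 := by
      intro w hw
      have : w ∈ Si := (hB.cover w).mpr (Or.inl hw)
      rw [hSi1] at this; simpa using this
    have hRall : ∀ w ∈ R, w = p1 := by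
      intro w hw
      have : w ∈ Si := (hB.cover w).mpr (Or.inr hw)
      rw [hSi1] at this; simpa using this
    have hL1 : L = [p1] := list_single_of hB.headL hLall hB.nodupL
    have hR1 : R = [p1] := list_single_of hB.headR hRall hB.nodupR
    have hplp1 : pl = p1 := by
      rw [hL1] at hpl
      exact (by simpa using hpl : p1 = pl).symm
    have hprp1 : pr = p1 := by
      rw [hR1] at hpr
      exact (by simpa using hpr : p1 = pr).symm
    exact core S hy hgp p1 ptop h1 hT Si hSis hUne hSilow L R hB pl pr hpl hpr
      (Or.inl ⟨hplp1, hprp1⟩)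
  · exact core S hy hgp p1 ptop h1 hT Si hSis hUne hSilow L R hB pl pr hpl hpr (Or.inr hd2)
  · -- mirror case: reflect in the y-axis
    obtain ⟨hlt, r, hrS, hr1, hr2, hband, z, hzS, hz1, hz2⟩ := hd3
    have hyn : DistinctY (S.image negx) := by
      intro p hp q hq hpq
      rw [mem_image_negx] at hp hq
      have : negx p = negx q := hy _ hp _ hq (by simpa using hpq)
      rw [← negx_invol p, this, negx_invol]
    have hgpn : GenPos (S.image negx) := by
      intro p hp q hq s hs hpq hps hqs
      rw [mem_image_negx] at hp hq hs
      have h0 := hgp _ hp _ hq _ hs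
        (fun h => hpq (by rw [← negx_invol p, h, negx_invol]))
        (fun h => hps (by rw [← negx_invol p, h, negx_invol]))
        (fun h => hqs (by rw [← negx_invol q, h, negx_invol]))
      intro hc
      apply h0
      have : xprod (negx (negx p)) (negx (negx q)) (negx (negx s)) = - xprod (negx p) (negx q) (negx s) :=
        xprod_negx _ _ _
      simp only [negx_invol] at this
      linarith
    have h1n : IsLowest (S.image negx) (negx p1) := by
      refine ⟨mem_image_negx.mpr (by simpa using h1.1), ?_⟩
      intro q hq hqn
      rw [mem_image_negx] at hq
      have : negx q ≠ p1 := fun h => hqn (by rw [← negx_invol q, h])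
      have := h1.2 (negx q) hq this
      simpa using this
    have hTn : IsHighest (S.image negx) (negx ptop) := by
      refine ⟨mem_image_negx.mpr (by simpa using hT.1), ?_⟩
      intro q hq hqn
      rw [mem_image_negx] at hq
      have : negx q ≠ ptop := fun h => hqn (by rw [← negx_invol q, h])
      have := hT.2 (negx q) hq this
      simpa using this
    have hSisn : Si.image negx ⊆ S.image negx := Finset.image_subset_image hSis
    have hUnen : ((S.image negx) \ (Si.image negx)).Nonempty := by
      obtain ⟨u, hu⟩ := hUne
      rw [Finset.mem_sdiff] at hu
      refine ⟨negx u, ?_⟩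
      rw [Finset.mem_sdiff]
      constructor
      · exact mem_image_negx.mpr (by simpa using hu.1)
      · intro hc
        rw [mem_image_negx] at hc
        simp only [negx_invol] at hc
        exact hu.2 hc
    have hSilown : ∀ p ∈ Si.image negx, ∀ q ∈ S.image negx, q ∉ Si.image negx → p.2 < q.2 := by
      intro p hp q hq hqn
      rw [mem_image_negx] at hp hq
      have hqn' : negx q ∉ Si := by
        intro hc
        exact hqn (mem_image_negx.mpr (by simpa using hc))
      have := hSilow (negx p) hp (negx q) hq hqn'
      simpa using this
    have hBn : IsBipath (Si.image negx) (negx p1) (R.map negx) (L.map negx) := by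
      constructor
      · exact mono_map_negx hB.monoR
      · exact mono_map_negx hB.monoL
      · rw [List.head?_map, hB.headR]; rfl
      · rw [List.head?_map, hB.headL]; rfl
      · exact hB.nodupR.map negx_inj
      · exact hB.nodupL.map negx_inj
      · intro p
        rw [mem_map_negx, mem_map_negx, mem_image_negx]
        have := hB.cover (negx p)
        tauto
      · intro p hp1 hp2
        rw [mem_map_negx] at hp1 hp2
        have := hB.shared (negx p) hp2 hp1
        rw [← negx_invol p, this]
      · exact polyNC_negx hB.noncross
      · intro p hp q hq hpq hgt hne
        have hp' := polyPts_map_negx hp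
        have hq' := polyPts_map_negx hq
        have := hB.leftOf (negx q) hq' (negx p) hp' (by simpa using hpq.symm)
          (by simpa using hpq ▸ hgt)
          (fun h => hne (negx_inj h).symm)
        simp only [negx_fst] at this
        linarith
    have hlastRn : (R.map negx).getLast? = some (negx pr) := by
      rw [List.getLast?_map, hpr]; rfl
    have hlastLn : (L.map negx).getLast? = some (negx pl) := by
      rw [List.getLast?_map, hpl]; rfl
    have hsafen : ((negx pr) = negx p1 ∧ (negx pl) = negx p1) ∨
        ((negx pl).2 < (negx pr).2 ∧ ∃ r' ∈ S.image negx, (negx pl).2 < r'.2 ∧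
          r'.2 ≤ (negx pr).2 ∧
          (∀ q ∈ S.image negx, (negx pl).2 < q.2 → q.2 ≤ (negx pr).2 →
            0 ≤ xprod (negx pl) r' q) ∧
          ∃ z' ∈ S.image negx, xprod (negx pl) r' z' < 0 ∧ (negx pr).2 < z'.2) := by
      refine Or.inr ⟨by simpa using hlt, negx r, mem_image_negx.mpr (by simpa using hrS),
        by simpa using hr1, by simpa using hr2, ?_, negx z,
        mem_image_negx.mpr (by simpa using hzS), ?_, by simpa using hz2⟩
      · intro q hq hq1 hq2
        rw [mem_image_negx] at hq
        have hxp : xprod (negx pl) (negx r) (negx (negx q)) = - xprod pl r (negx q) :=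
          xprod_negx pl r (negx q)
        rw [negx_invol] at hxp
        rw [hxp]
        have := hband (negx q) hq (by simpa using hq1) (by simpa using hq2)
        linarith
      · have hxp : xprod (negx pl) (negx r) (negx z) = - xprod pl r z := xprod_negx pl r z
        rw [hxp]
        linarith
    obtain ⟨L'', R'', hC, hpre1, hpre2, hres1, hres2⟩ :=
      core (S.image negx) hyn hgpn (negx p1) (negx ptop) h1n hTn (Si.image negx) hSisn
        hUnen hSilown (R.map negx) (L.map negx) hBn (negx pr) (negx pl) hlastRn hlastLn
        hsafen
    refine ⟨R''.map negx, L''.map negx, hamcycle_negx hC, ?_, ?_, ?_, ?_⟩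
    · have h' := hpre2.map negx
      rw [List.map_map] at h'
      have he : L.map (negx ∘ negx) = L := by
        conv_rhs => rw [← List.map_id L]
        exact List.map_congr_left (fun a _ => by simp)
      rwa [he] at h'
    · have h' := hpre1.map negx
      rw [List.map_map] at h'
      have he : R.map (negx ∘ negx) = R := by
        conv_rhs => rw [← List.map_id R]
        exact List.map_congr_left (fun a _ => by simp)
      rwa [he] at h'
    · intro p hp
      rw [mem_map_negx] at hp
      have := hres2 (negx p) hp
      rw [mem_image_negx, mem_map_negx] at this
      simpa using this
    · intro p hp
      rw [mem_map_negx] at hp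
      have := hres1 (negx p) hp
      rw [mem_image_negx, mem_map_negx] at this
      simpa using this

end Aux8
/-- a safe bipath extends to a non-crossing monotone Hamiltonian
cycle on `S`. -/
theorem stmt_11 (S : Finset Pt) (n : ℕ) (hn : S.card = n) (hy : DistinctY S)
    (hgp : GenPos S)
    (p1 ptop : Pt) (h1 : IsLowest S p1) (hT : IsHighest S ptop)
    (i : ℕ) (hi1 : 1 ≤ i) (hin : i ≤ n - 1)
    (Si : Finset Pt) (hSis : Si ⊆ S) (hSic : Si.card = i)
    (hSilow : ∀ p ∈ Si, ∀ q ∈ S, q ∉ Si → p.2 < q.2)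
    (L R : List Pt) (hB : IsBipath Si p1 L R)
    (pl pr : Pt) (hpl : L.getLast? = some pl) (hpr : R.getLast? = some pr)
    (hsafe : i = 1 ∨
      (pr.2 < pl.2 ∧ ∃ r ∈ S, pr.2 < r.2 ∧ r.2 ≤ pl.2 ∧
        (∀ q ∈ S, pr.2 < q.2 → q.2 ≤ pl.2 → 0 ≤ xprod pr r q) ∧
        ∃ z ∈ S, xprod pr r z < 0 ∧ pl.2 < z.2) ∨
      (pl.2 < pr.2 ∧ ∃ r ∈ S, pl.2 < r.2 ∧ r.2 ≤ pr.2 ∧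
        (∀ q ∈ S, pl.2 < q.2 → q.2 ≤ pr.2 → xprod pl r q ≤ 0) ∧
        ∃ z ∈ S, 0 < xprod pl r z ∧ pr.2 < z.2)) :
    ∃ L' R' : List Pt, ExtendsTo S Si p1 ptop L R L' R' := by
  exact stmt_11' S n hn hy hgp p1 ptop h1 hT i hi1 hin Si hSis hSic hSilow L R hB pl pr hpl hpr hsafe
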